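/- Let A be a finite-dimensional associative unital k-algebra with a k-basis B, and let f : B → k be a function. If x ∈ A is a unit such that left multiplication by x maps the set B bijectively onto itself, then the k-linear map ψ_x : A → A given by ψ_x(a) = x a is an automorphism of the Cayley evolution algebra Cay(f). If moreover every element of B is a unit of A, then for every unit x ≠ 1 with xB = B, the map ψ_x fixes no element of B. -/

import Mathlib

open scoped BigOperators

variable {k : Type*} [Field k] {ι : Type*} [Fintype ι]
  {A : Type*} [Ring A] [Algebra k A]

/-- The Cayley evolution product on a finite-dimensional associative unital `k`-algebra `A`
with basis `b`: it is the `k`-bilinear product with `bᵢ · bᵢ = ∑ⱼ f j • (bᵢ * bⱼ)`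
(product taken in `A`) and `bᵢ · bⱼ = 0` for `i ≠ j`. -/
noncomputable def cayMulA (b : Module.Basis ι k A) (f : ι → k) (x y : A) : A :=
  ∑ i : ι, (b.repr x i * b.repr y i) • ∑ j : ι, f j • (b i * b j)

/-- If `x ∈ A` is a unit whose left multiplication maps the basis set `B`
bijectively onto itself, then `a ↦ x * a` is a `k`-linear automorphism of the Cayley
evolution algebra `Cay(f)`; if moreover every basis element is a unit, then for `x ≠ 1`
this automorphism fixes no basis element. -/
theorem units_give_cayley_automorphisms {k : Type*} [Field k] {ι : Type*} [Fintype ι]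
    {A : Type*} [Ring A] [Algebra k A] (b : Module.Basis ι k A) (f : ι → k)
    (x : A) (hx : IsUnit x)
    (hB : Set.BijOn (fun a => x * a) (Set.range ⇑b) (Set.range ⇑b)) :
    (∃ ψ : A ≃ₗ[k] A, (∀ a : A, ψ a = x * a) ∧
      ∀ u v : A, ψ (cayMulA b f u v) = cayMulA b f (ψ u) (ψ v)) ∧
    ((∀ i, IsUnit (b i)) → x ≠ 1 → ∀ i : ι, x * b i ≠ b i) := by
  obtain ⟨xu, rfl⟩ := hx
  have hmap : ∀ i : ι, ∃ j : ι, b j = (xu : A) * b i := fun i => hB.mapsTo ⟨i, rfl⟩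
  choose σ hσ using hmap
  have hσinj : Function.Injective σ := by
    intro i j h
    apply b.injective
    have h1 : (xu : A) * b i = (xu : A) * b j := by rw [← hσ, ← hσ, h]
    simpa using congrArg (fun a => (↑xu⁻¹ : A) * a) h1
  let σe : ι ≃ ι := Equiv.ofBijective σ (Finite.injective_iff_bijective.mp hσinj)
  have hσe : ∀ i, σe i = σ i := fun _ => rfl
  have hrepr : ∀ (u : A) (j : ι), b.repr ((xu : A) * u) j = b.repr u (σe.symm j) := by
    intro u j
    conv_lhs => rw [← b.sum_repr u, Finset.mul_sum]
    simp only [mul_smul_comm, ← hσ]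
    rw [map_sum, Finsupp.finset_sum_apply]
    simp only [map_smul, Module.Basis.repr_self, Finsupp.smul_single', Finsupp.single_apply]
    simp only [← hσe]
    classical
    rw [Finset.sum_congr rfl (fun i _ => Finsupp.single_apply)]
    simp [Equiv.apply_eq_iff_eq_symm_apply]
  have key : ∀ u v : A,
      (xu : A) * cayMulA b f u v = cayMulA b f ((xu : A) * u) ((xu : A) * v) := by
    intro u v
    unfold cayMulA
    rw [Finset.mul_sum]
    rw [← Equiv.sum_comp σe
      (fun i => (b.repr ((xu : A) * u) i * b.repr ((xu : A) * v) i) •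
        ∑ j, f j • (b i * b j))]
    refine Finset.sum_congr rfl fun i _ => ?_
    rw [hrepr, hrepr, Equiv.symm_apply_apply, hσe, mul_smul_comm]
    congr 1
    rw [Finset.mul_sum]
    refine Finset.sum_congr rfl fun j _ => ?_
    rw [mul_smul_comm, ← mul_assoc, hσ]
  constructor
  · refine ⟨LinearEquiv.ofLinear (LinearMap.mulLeft k (xu : A))
      (LinearMap.mulLeft k (↑xu⁻¹ : A)) ?_ ?_, fun a => rfl, ?_⟩
    · ext a; simp [← mul_assoc]
    · ext a; simp [← mul_assoc]
    · intro u v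
      simpa using key u v
  · intro hu hx1 i heq
    apply hx1
    have : (xu : A) * b i = 1 * b i := by rw [heq, one_mul]
    exact (hu i).mul_right_cancel this
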